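/- There is no polynomial h ∈ ℝ[m,v] such that h(m,v)² = (3m² − 7mv − 2v²)² − 4(2m − 2v)(m³ + 3m²v + 2mv²); that is, the discriminant of f with respect to u is not the square of any real polynomial in m and v. Consequently f(m,u,v) admits no factorization of the form f = (a₁(m,v)u + b₁(m,v))(a₂(m,v)u + b₂(m,v))·c(m,v) with a₁, a₂, b₁, b₂, c ∈ ℝ[m,v]. -/
import Mathlib


open MvPolynomial

/-- The discriminant of `f` with respect to `u`, as an element of `ℝ[m,v]`
(variable `0` is `m`, variable `1` is `v`):
`(3m² − 7mv − 2v²)² − 4(2m − 2v)(m³ + 3m²v + 2mv²)`. -/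
noncomputable def discF : MvPolynomial (Fin 2) ℝ :=
  (3 * X 0 ^ 2 - 7 * X 0 * X 1 - 2 * X 1 ^ 2) ^ 2
    - 4 * (2 * X 0 - 2 * X 1) * (X 0 ^ 3 + 3 * X 0 ^ 2 * X 1 + 2 * X 0 * X 1 ^ 2)

/-- `f(m,u,v)` as an element of `ℝ[m,u,v]` (variable `0` is `m`, `1` is `u`, `2` is `v`). -/
noncomputable def fMv : MvPolynomial (Fin 3) ℝ :=
  (2 * X 0 - 2 * X 2) * X 1 ^ 2
    + (3 * X 0 ^ 2 - 7 * X 0 * X 2 - 2 * X 2 ^ 2) * X 1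
    + (X 0 ^ 3 + 3 * X 0 ^ 2 * X 2 + 2 * X 0 * X 2 ^ 2)

/-- The inclusion `ℝ[m,v] → ℝ[m,u,v]` sending `m ↦ m`, `v ↦ v`. -/
noncomputable def inclMV : MvPolynomial (Fin 2) ℝ →ₐ[ℝ] MvPolynomial (Fin 3) ℝ :=
  rename ![0, 2]

/-- The discriminant of `f` with respect to `u` is not the square of
any real polynomial in `m` and `v`; consequently `f` admits no factorization of the
form `f = (a₁(m,v)u + b₁(m,v))(a₂(m,v)u + b₂(m,v))·c(m,v)` with
`a₁, a₂, b₁, b₂, c ∈ ℝ[m,v]`. -/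
theorem discriminant_not_square_and_no_split :
    (¬ ∃ h : MvPolynomial (Fin 2) ℝ, h ^ 2 = discF) ∧
    (¬ ∃ a₁ b₁ a₂ b₂ c : MvPolynomial (Fin 2) ℝ,
      fMv = (inclMV a₁ * X 1 + inclMV b₁) * (inclMV a₂ * X 1 + inclMV b₂)
              * inclMV c) := by
  constructor
  · rintro ⟨h, hh⟩
    have h2 := congrArg (eval ![(2:ℝ), 1]) hh
    rw [discF] at h2
    simp only [map_pow, map_sub, map_mul, map_add, map_ofNat, eval_X,
      Matrix.cons_val_zero, Matrix.cons_val_one, Matrix.head_cons] at h2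
    norm_num at h2
    nlinarith [sq_nonneg (eval ![(2:ℝ), 1] h), h2]
  · rintro ⟨a₁, b₁, a₂, b₂, c, hf⟩
    set A₁ := eval ![(2:ℝ), 1] a₁ with hA₁
    set B₁ := eval ![(2:ℝ), 1] b₁ with hB₁
    set A₂ := eval ![(2:ℝ), 1] a₂ with hA₂
    set B₂ := eval ![(2:ℝ), 1] b₂ with hB₂
    set C := eval ![(2:ℝ), 1] c with hC
    have key : ∀ u : ℝ, (A₁ * u + B₁) * (A₂ * u + B₂) * C = 2 * u ^ 2 - 4 * u + 24 := by
      intro u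
      have hcomp : (![(2:ℝ), u, 1]) ∘ (![0, 2] : Fin 2 → Fin 3) = ![(2:ℝ), 1] := by
        funext i; fin_cases i <;> rfl
      have h3 := congrArg (eval ![(2:ℝ), u, 1]) hf
      rw [fMv] at h3
      simp only [inclMV, AlgHom.coe_mk, map_add, map_mul, map_sub, map_pow, map_ofNat,
        eval_X, eval_rename, hcomp, Matrix.cons_val_zero, Matrix.cons_val_one,
        Matrix.head_cons, Matrix.cons_val_two, Matrix.tail_cons] at h3
      rw [← hA₁, ← hB₁, ← hA₂, ← hB₂, ← hC] at h3
      nlinarith [h3]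
    by_cases hA1 : A₁ = 0
    · by_cases hA2 : A₂ = 0
      · have k0 := key 0
        have k1 := key 1
        rw [hA1, hA2] at k0 k1
        nlinarith [k0, k1]
      · have := key (-B₂ / A₂)
        rw [hA1] at this
        have hz : A₂ * (-B₂ / A₂) + B₂ = 0 := by field_simp; ring
        rw [hz] at this
        nlinarith [this, sq_nonneg (-B₂ / A₂ - 1)]
    · have := key (-B₁ / A₁)
      have hz : A₁ * (-B₁ / A₁) + B₁ = 0 := by field_simp; ring
      rw [hz] at this
      nlinarith [this, sq_nonneg (-B₁ / A₁ - 1)]
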